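/- arXiv:1303.0099 — 3 statements merged into one kernel-verified Lean document; each statement's English description precedes it below -/
import Mathlib

section
/- Let μ₁, μ₂, β > 0 and γ > 0. The function F_γ is continuously differentiable on ℝ², and its gradient satisfies: ∇F_γ(s,t) = (μ₁ s³ + β s t², μ₂ t³ + β s² t) at every point with F(s,t) ≤ γ²/4, and ∇F_γ(s,t) = (γ/(2√(F(s,t)))) · (μ₁ s³ + β s t², μ₂ t³ + β s² t) at every point with F(s,t) > γ²/4. -/
/-- `F(s,t) = (1/4)(μ₁ s⁴ + 2β s² t² + μ₂ t⁴)`. -/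
noncomputable def F (μ₁ μ₂ β s t : ℝ) : ℝ :=
  (1 / 4) * (μ₁ * s ^ 4 + 2 * β * s ^ 2 * t ^ 2 + μ₂ * t ^ 4)

/-- The truncated nonlinearity `F_γ`. -/
noncomputable def Ftrunc (μ₁ μ₂ β γ s t : ℝ) : ℝ :=
  if F μ₁ μ₂ β s t ≤ γ ^ 2 / 4 then F μ₁ μ₂ β s t
  else γ * Real.sqrt (F μ₁ μ₂ β s t) - γ ^ 2 / 4

-- gluing lemma
lemma glue {a : ℝ} {f h g : ℝ → ℝ} {f' : ℝ} (hf : HasDerivAt f f' a)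
    (hh : HasDerivAt h f' a) (hg1 : ∀ x ≤ a, g x = f x) (hg2 : ∀ x, a ≤ x → g x = h x) :
    HasDerivAt g f' a := by
  rw [hasDerivAt_iff_isLittleO] at *
  rw [Asymptotics.isLittleO_iff]
  intro c hc
  filter_upwards [Asymptotics.isLittleO_iff.mp hf hc, Asymptotics.isLittleO_iff.mp hh hc]
    with x h1 h2
  have hga : g a = f a := hg1 a le_rfl
  rcases le_total x a with hx | hx
  · rw [hg1 x hx, hga]; exact h1
  · rw [hg2 x hx, hga, (hg1 a le_rfl).symm.trans (hg2 a le_rfl)]; exact h2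

lemma hasDerivAt_trunc (γ : ℝ) (hγ : 0 < γ) (x : ℝ) :
    HasDerivAt (fun y => if y ≤ γ ^ 2 / 4 then y else γ * Real.sqrt y - γ ^ 2 / 4)
      (γ / (2 * Real.sqrt (max x (γ ^ 2 / 4)))) x := by
  set a : ℝ := γ ^ 2 / 4 with ha_def
  have ha : 0 < a := by positivity
  have hsa : Real.sqrt a = γ / 2 := by
    rw [ha_def, show γ ^ 2 / 4 = (γ / 2) ^ 2 by ring, Real.sqrt_sq (by positivity)]
  have hbranch : ∀ y : ℝ, 0 < y →
      HasDerivAt (fun z => γ * Real.sqrt z - a) (γ / (2 * Real.sqrt y)) y := by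
    intro y hy
    have := ((Real.hasDerivAt_sqrt hy.ne').const_mul γ).sub_const a
    rw [show γ / (2 * Real.sqrt y) = γ * (1 / (2 * Real.sqrt y)) by ring]
    exact this
  rcases lt_trichotomy x a with hx | hx | hx
  · -- left of the kink: function is the identity nearby
    have hev : (fun y => if y ≤ a then y else γ * Real.sqrt y - a) =ᶠ[nhds x] fun y => y := by
      filter_upwards [Iio_mem_nhds hx] with y hy
      exact if_pos (le_of_lt hy)
    have : HasDerivAt (fun y : ℝ => y) (γ / (2 * Real.sqrt (max x a))) x := by
      have hmax : max x a = a := max_eq_right hx.le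
      have : γ / (2 * Real.sqrt (max x a)) = 1 := by
        rw [hmax, hsa]; field_simp
      rw [this]; exact hasDerivAt_id x
    exact this.congr_of_eventuallyEq hev
  · -- the kink: glue
    have h1 : HasDerivAt (fun y : ℝ => y) 1 x := hasDerivAt_id x
    have h2 : HasDerivAt (fun z => γ * Real.sqrt z - a) 1 x := by
      have := hbranch x (hx ▸ ha)
      rwa [show γ / (2 * Real.sqrt x) = 1 by rw [hx, hsa]; field_simp] at this
    have hval : γ / (2 * Real.sqrt (max x a)) = 1 := by
      rw [hx, max_self, hsa]; field_simp
    rw [hval, hx]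
    rw [hx] at h1 h2
    refine glue h1 h2 (fun y hy => if_pos hy) (fun y hy => ?_)
    rcases eq_or_lt_of_le hy with hy' | hy'
    · rw [if_pos hy'.ge, ← hy', hsa]
      rw [ha_def]; ring
    · exact if_neg (not_le.mpr hy')
  · -- right of the kink
    have hx0 : 0 < x := lt_trans ha hx
    have hev : (fun y => if y ≤ a then y else γ * Real.sqrt y - a) =ᶠ[nhds x]
        fun z => γ * Real.sqrt z - a := by
      filter_upwards [Ioi_mem_nhds hx] with y hy
      exact if_neg (not_le.mpr hy)
    have hmax : max x a = x := max_eq_left hx.le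
    rw [hmax]
    exact (hbranch x hx0).congr_of_eventuallyEq hev

lemma hasFDerivAt_F (μ₁ μ₂ β s t : ℝ) :
    HasFDerivAt (fun p : ℝ × ℝ => F μ₁ μ₂ β p.1 p.2)
      ((μ₁ * s ^ 3 + β * s * t ^ 2) • (ContinuousLinearMap.fst ℝ ℝ ℝ) +
        (μ₂ * t ^ 3 + β * s ^ 2 * t) • (ContinuousLinearMap.snd ℝ ℝ ℝ)) (s, t) := by
  have h1 : HasFDerivAt (fun p : ℝ × ℝ => p.1) (ContinuousLinearMap.fst ℝ ℝ ℝ) (s, t) :=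
    hasFDerivAt_fst
  have h2 : HasFDerivAt (fun p : ℝ × ℝ => p.2) (ContinuousLinearMap.snd ℝ ℝ ℝ) (s, t) :=
    hasFDerivAt_snd
  have p14 := (hasDerivAt_pow 4 s).comp_hasFDerivAt (s, t) h1
  have p12 := (hasDerivAt_pow 2 s).comp_hasFDerivAt (s, t) h1
  have p22 := (hasDerivAt_pow 2 t).comp_hasFDerivAt (s, t) h2
  have p24 := (hasDerivAt_pow 4 t).comp_hasFDerivAt (s, t) h2
  have H := ((((p14.const_mul μ₁).add
      (((p12.const_mul (2 * β)).mul p22))).add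
      (p24.const_mul μ₂)).const_mul ((1:ℝ) / 4))
  unfold F
  refine H.congr_fderiv ?_
  refine ContinuousLinearMap.ext fun h => ?_
  simp [ContinuousLinearMap.smul_apply]
  ring

/-- `F_γ` is `C¹` on `ℝ²`, and its (Fréchet) differential is given by the
pointwise formulas for the gradient in the two regions. -/
theorem stmt_3 (μ₁ μ₂ β γ : ℝ) (hμ₁ : 0 < μ₁) (hμ₂ : 0 < μ₂) (hβ : 0 < β) (hγ : 0 < γ) :
    ContDiff ℝ 1 (fun p : ℝ × ℝ => Ftrunc μ₁ μ₂ β γ p.1 p.2) ∧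
    (∀ s t : ℝ, F μ₁ μ₂ β s t ≤ γ ^ 2 / 4 →
      ∀ h : ℝ × ℝ, fderiv ℝ (fun p : ℝ × ℝ => Ftrunc μ₁ μ₂ β γ p.1 p.2) (s, t) h =
        (μ₁ * s ^ 3 + β * s * t ^ 2) * h.1 + (μ₂ * t ^ 3 + β * s ^ 2 * t) * h.2) ∧
    (∀ s t : ℝ, γ ^ 2 / 4 < F μ₁ μ₂ β s t →
      ∀ h : ℝ × ℝ, fderiv ℝ (fun p : ℝ × ℝ => Ftrunc μ₁ μ₂ β γ p.1 p.2) (s, t) h =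
        γ / (2 * Real.sqrt (F μ₁ μ₂ β s t)) *
          ((μ₁ * s ^ 3 + β * s * t ^ 2) * h.1 + (μ₂ * t ^ 3 + β * s ^ 2 * t) * h.2)) := by
  have ha : (0:ℝ) < γ ^ 2 / 4 := by positivity
  have hsa : Real.sqrt (γ ^ 2 / 4) = γ / 2 := by
    rw [show γ ^ 2 / 4 = (γ / 2) ^ 2 by ring, Real.sqrt_sq (by positivity)]
  set g : ℝ → ℝ := fun y => if y ≤ γ ^ 2 / 4 then y else γ * Real.sqrt y - γ ^ 2 / 4 with hg_def
  have hgd : ∀ x : ℝ, HasDerivAt g (γ / (2 * Real.sqrt (max x (γ ^ 2 / 4)))) x :=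
    hasDerivAt_trunc γ hγ
  have hkey : (fun p : ℝ × ℝ => Ftrunc μ₁ μ₂ β γ p.1 p.2) =
      fun p : ℝ × ℝ => g (F μ₁ μ₂ β p.1 p.2) := rfl
  -- chain rule at each point
  have hcomp : ∀ s t : ℝ, HasFDerivAt (fun p : ℝ × ℝ => Ftrunc μ₁ μ₂ β γ p.1 p.2)
      ((γ / (2 * Real.sqrt (max (F μ₁ μ₂ β s t) (γ ^ 2 / 4)))) •
        ((μ₁ * s ^ 3 + β * s * t ^ 2) • (ContinuousLinearMap.fst ℝ ℝ ℝ) +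
          (μ₂ * t ^ 3 + β * s ^ 2 * t) • (ContinuousLinearMap.snd ℝ ℝ ℝ))) (s, t) := by
    intro s t
    rw [hkey]
    exact (hgd (F μ₁ μ₂ β s t)).comp_hasFDerivAt (s, t) (hasFDerivAt_F μ₁ μ₂ β s t)
  refine ⟨?_, ?_, ?_⟩
  · -- C¹
    have hgc : ContDiff ℝ 1 g := by
      rw [contDiff_one_iff_deriv]
      refine ⟨fun x => (hgd x).differentiableAt, ?_⟩
      have : deriv g = fun x => γ / (2 * Real.sqrt (max x (γ ^ 2 / 4))) :=
        funext fun x => (hgd x).deriv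
      rw [this]
      refine continuous_const.div
        (continuous_const.mul (Real.continuous_sqrt.comp (continuous_id.max continuous_const)))
        fun x => ?_
      have : 0 < Real.sqrt (max x (γ ^ 2 / 4)) :=
        Real.sqrt_pos.mpr (lt_max_of_lt_right ha)
      positivity
    have hFc : ContDiff ℝ 1 (fun p : ℝ × ℝ => F μ₁ μ₂ β p.1 p.2) := by
      unfold F; fun_prop
    rw [hkey]
    exact hgc.comp hFc
  · intro s t hFst h
    rw [(hcomp s t).fderiv]
    have hmax : max (F μ₁ μ₂ β s t) (γ ^ 2 / 4) = γ ^ 2 / 4 := max_eq_right hFst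
    have hfac : γ / (2 * Real.sqrt (max (F μ₁ μ₂ β s t) (γ ^ 2 / 4))) = 1 := by
      rw [hmax, hsa]; field_simp
    rw [hfac]
    simp [ContinuousLinearMap.smul_apply]
  · intro s t hFst h
    rw [(hcomp s t).fderiv]
    have hmax : max (F μ₁ μ₂ β s t) (γ ^ 2 / 4) = F μ₁ μ₂ β s t := max_eq_left hFst.le
    rw [hmax]
    simp [ContinuousLinearMap.smul_apply]
    ring
end

section
/- Let μ₁, μ₂ > 0, β ≥ max{μ₁, μ₂} and γ > 0. Then for all s, t ∈ ℝ one has 0 ≤ 2·F_γ(s,t) ≤ s·∂ₛF_γ(s,t) + t·∂ₜF_γ(s,t) ≤ √β·γ·(s² + t²); moreover, if F(s,t) ≤ γ²/4 then s·∂ₛF_γ(s,t) + t·∂ₜF_γ(s,t) = 4·F_γ(s,t). -/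
/-- Partial derivative of `F_γ` with respect to the first argument. -/
noncomputable def dsFtrunc (μ₁ μ₂ β γ s t : ℝ) : ℝ :=
  deriv (fun s' => Ftrunc μ₁ μ₂ β γ s' t) s

/-- Partial derivative of `F_γ` with respect to the second argument. -/
noncomputable def dtFtrunc (μ₁ μ₂ β γ s t : ℝ) : ℝ :=
  deriv (fun t' => Ftrunc μ₁ μ₂ β γ s t') t

noncomputable def phiT (γ x : ℝ) : ℝ :=
  if x ≤ γ ^ 2 / 4 then x else γ * Real.sqrt x - γ ^ 2 / 4

noncomputable def mphi (γ x : ℝ) : ℝ :=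
  if x ≤ γ ^ 2 / 4 then 1 else γ / (2 * Real.sqrt x)

lemma hasDerivAt_phiT {γ : ℝ} (hγ : 0 < γ) (x : ℝ) :
    HasDerivAt (phiT γ) (mphi γ x) x := by
  have hγ4 : (0:ℝ) < γ ^ 2 / 4 := by positivity
  rcases lt_trichotomy x (γ ^ 2 / 4) with h | h | h
  · rw [mphi, if_pos h.le]
    have heq : phiT γ =ᶠ[nhds x] id := by
      filter_upwards [Iio_mem_nhds h] with y hy
      simp [phiT, (Set.mem_Iio.mp hy).le]
    exact (hasDerivAt_id x).congr_of_eventuallyEq heq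
  · -- boundary point
    rw [mphi, if_pos h.le]
    have hx0 : 0 < x := h ▸ hγ4
    have hsq : Real.sqrt x = γ / 2 := by
      rw [h, show γ ^ 2 / 4 = (γ / 2) ^ 2 by ring, Real.sqrt_sq (by positivity)]
    have hleft : HasDerivWithinAt (phiT γ) 1 (Set.Iic x) x := by
      refine ((hasDerivAt_id x).hasDerivWithinAt).congr (fun y hy => ?_) ?_
      · simp [phiT, le_trans (Set.mem_Iic.mp hy) h.le]
      · simp [phiT, h.le]
    have hψ : HasDerivAt (fun y => γ * Real.sqrt y - γ ^ 2 / 4) 1 x := by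
      have := ((Real.hasDerivAt_sqrt hx0.ne').const_mul γ).sub_const (γ ^ 2 / 4)
      refine this.congr_deriv ?_
      rw [hsq]
      field_simp
    have hright : HasDerivWithinAt (phiT γ) 1 (Set.Ici x) x := by
      refine hψ.hasDerivWithinAt.congr (fun y hy => ?_) ?_
      · rcases eq_or_lt_of_le (Set.mem_Ici.mp hy) with rfl | hlt
        · simp only [phiT, if_pos h.le]
          rw [hsq, h]; ring
        · simp [phiT, not_le.mpr (h ▸ hlt)]
      · simp only [phiT, if_pos h.le]
        rw [hsq, h]; ring
    have := hleft.union hright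
    rwa [Set.Iic_union_Ici, hasDerivWithinAt_univ] at this
  · rw [mphi, if_neg (not_le.mpr h)]
    have hx0 : 0 < x := lt_trans hγ4 h
    have hψ : HasDerivAt (fun y => γ * Real.sqrt y - γ ^ 2 / 4) (γ / (2 * Real.sqrt x)) x := by
      have := ((Real.hasDerivAt_sqrt hx0.ne').const_mul γ).sub_const (γ ^ 2 / 4)
      refine this.congr_deriv ?_
      ring
    have heq : phiT γ =ᶠ[nhds x] fun y => γ * Real.sqrt y - γ ^ 2 / 4 := by
      filter_upwards [Ioi_mem_nhds h] with y hy
      simp [phiT, not_le.mpr (Set.mem_Ioi.mp hy)]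
    exact hψ.congr_of_eventuallyEq heq

lemma hasDerivAt_F_s (μ₁ μ₂ β s t : ℝ) :
    HasDerivAt (fun s' => F μ₁ μ₂ β s' t) (μ₁ * s ^ 3 + β * s * t ^ 2) s := by
  have h4 := hasDerivAt_pow 4 s
  have h2 := hasDerivAt_pow 2 s
  have := (((h4.const_mul μ₁).add ((h2.const_mul (2 * β)).mul_const (t ^ 2))).add_const
    (μ₂ * t ^ 4)).const_mul (1 / 4)
  refine this.congr_deriv ?_
  push_cast
  ring

lemma hasDerivAt_F_t (μ₁ μ₂ β s t : ℝ) :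
    HasDerivAt (fun t' => F μ₁ μ₂ β s t') (β * s ^ 2 * t + μ₂ * t ^ 3) t := by
  have h4 := hasDerivAt_pow 4 t
  have h2 := hasDerivAt_pow 2 t
  have := (((hasDerivAt_const t (μ₁ * s ^ 4)).add
    (h2.const_mul (2 * β * s ^ 2))).add (h4.const_mul μ₂)).const_mul (1 / 4)
  refine this.congr_deriv ?_
  push_cast
  ring

lemma dsFtrunc_eq {γ : ℝ} (hγ : 0 < γ) (μ₁ μ₂ β s t : ℝ) :
    dsFtrunc μ₁ μ₂ β γ s t = mphi γ (F μ₁ μ₂ β s t) * (μ₁ * s ^ 3 + β * s * t ^ 2) := by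
  have h := (hasDerivAt_phiT hγ (F μ₁ μ₂ β s t)).comp s (hasDerivAt_F_s μ₁ μ₂ β s t)
  have heq : (fun s' => Ftrunc μ₁ μ₂ β γ s' t) = phiT γ ∘ fun s' => F μ₁ μ₂ β s' t := rfl
  rw [dsFtrunc, heq]
  exact h.deriv

lemma dtFtrunc_eq {γ : ℝ} (hγ : 0 < γ) (μ₁ μ₂ β s t : ℝ) :
    dtFtrunc μ₁ μ₂ β γ s t = mphi γ (F μ₁ μ₂ β s t) * (β * s ^ 2 * t + μ₂ * t ^ 3) := by
  have h := (hasDerivAt_phiT hγ (F μ₁ μ₂ β s t)).comp t (hasDerivAt_F_t μ₁ μ₂ β s t)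
  have heq : (fun t' => Ftrunc μ₁ μ₂ β γ s t') = phiT γ ∘ fun t' => F μ₁ μ₂ β s t' := rfl
  rw [dtFtrunc, heq]
  exact h.deriv

theorem stmt_4 (μ₁ μ₂ β : ℝ) (hμ₁ : 0 < μ₁) (hμ₂ : 0 < μ₂) (hβ : max μ₁ μ₂ ≤ β)
    (γ : ℝ) (hγ : 0 < γ) (s t : ℝ) :
    0 ≤ 2 * Ftrunc μ₁ μ₂ β γ s t ∧
    2 * Ftrunc μ₁ μ₂ β γ s t ≤ s * dsFtrunc μ₁ μ₂ β γ s t + t * dtFtrunc μ₁ μ₂ β γ s t ∧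
    s * dsFtrunc μ₁ μ₂ β γ s t + t * dtFtrunc μ₁ μ₂ β γ s t ≤
      Real.sqrt β * γ * (s ^ 2 + t ^ 2) ∧
    (F μ₁ μ₂ β s t ≤ γ ^ 2 / 4 →
      s * dsFtrunc μ₁ μ₂ β γ s t + t * dtFtrunc μ₁ μ₂ β γ s t = 4 * Ftrunc μ₁ μ₂ β γ s t) := by
  have hμ₁β : μ₁ ≤ β := le_trans (le_max_left _ _) hβ
  have hμ₂β : μ₂ ≤ β := le_trans (le_max_right _ _) hβ
  have hβ0 : 0 < β := lt_of_lt_of_le hμ₁ hμ₁β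
  set A := F μ₁ μ₂ β s t with hA
  have hA0 : 0 ≤ A := by
    rw [hA, F]; positivity
  set u := Real.sqrt A with hu
  have hu0 : 0 ≤ u := Real.sqrt_nonneg A
  have hu2 : u ^ 2 = A := Real.sq_sqrt hA0
  set c := s ^ 2 + t ^ 2 with hc
  have hc0 : 0 ≤ c := by positivity
  have hsb0 : 0 ≤ Real.sqrt β := Real.sqrt_nonneg β
  -- key : 2 u ≤ √β c
  have hkey : 2 * u ≤ Real.sqrt β * c := by
    have h1 : 4 * A ≤ β * c ^ 2 := by
      rw [hA, F, hc]
      nlinarith [mul_nonneg (sub_nonneg.mpr hμ₁β) (sq_nonneg (s ^ 2)),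
        mul_nonneg (sub_nonneg.mpr hμ₂β) (sq_nonneg (t ^ 2))]
    have h2 : Real.sqrt (4 * A) ≤ Real.sqrt (β * c ^ 2) := Real.sqrt_le_sqrt h1
    rwa [Real.sqrt_mul (by norm_num) A, show Real.sqrt 4 = 2 by
        rw [show (4:ℝ) = 2 ^ 2 by norm_num, Real.sqrt_sq (by norm_num)],
      Real.sqrt_mul hβ0.le, Real.sqrt_sq hc0] at h2
  have hS : s * dsFtrunc μ₁ μ₂ β γ s t + t * dtFtrunc μ₁ μ₂ β γ s t
      = mphi γ A * (4 * A) := by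
    rw [dsFtrunc_eq hγ, dtFtrunc_eq hγ, ← hA, hA, F]
    ring
  by_cases hle : A ≤ γ ^ 2 / 4
  · have hm : mphi γ A = 1 := if_pos hle
    have hFt : Ftrunc μ₁ μ₂ β γ s t = A := if_pos hle
    have huγ : 2 * u ≤ γ := by
      have := Real.sqrt_le_sqrt hle
      rw [show γ ^ 2 / 4 = (γ / 2) ^ 2 by ring, Real.sqrt_sq (by positivity)] at this
      rw [hu]; linarith
    refine ⟨by linarith, ?_, ?_, fun _ => by rw [hS, hm, hFt]; ring⟩
    · rw [hS, hm, hFt]; linarith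
    · rw [hS, hm]
      calc 1 * (4 * A) = (2 * u) * (2 * u) := by rw [← hu2]; ring
        _ ≤ (2 * u) * γ := mul_le_mul_of_nonneg_left huγ (by positivity)
        _ ≤ (Real.sqrt β * c) * γ := mul_le_mul_of_nonneg_right hkey hγ.le
        _ = Real.sqrt β * γ * c := by ring
  · have hgt : γ ^ 2 / 4 < A := not_le.mp hle
    have hm : mphi γ A = γ / (2 * u) := if_neg hle
    have hFt : Ftrunc μ₁ μ₂ β γ s t = γ * u - γ ^ 2 / 4 := if_neg hle
    have huγ : γ / 2 < u := by
      have : Real.sqrt (γ ^ 2 / 4) < u := by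
        rw [hu]
        exact Real.sqrt_lt_sqrt (by positivity) hgt
      rwa [show γ ^ 2 / 4 = (γ / 2) ^ 2 by ring, Real.sqrt_sq (by positivity)] at this
    have hupos : 0 < u := lt_trans (by positivity) huγ
    have hSval : mphi γ A * (4 * A) = 2 * γ * u := by
      rw [hm, ← hu2]
      field_simp
      ring
    refine ⟨?_, ?_, ?_, fun h => absurd h hle⟩
    · rw [hFt]; nlinarith
    · rw [hS, hSval, hFt]; nlinarith
    · rw [hS, hSval]
      calc 2 * γ * u = γ * (2 * u) := by ring
        _ ≤ γ * (Real.sqrt β * c) := mul_le_mul_of_nonneg_left hkey hγ.le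
        _ = Real.sqrt β * γ * c := by ring
end

section
/- Let μ₁, μ₂, β > 0 and let α₀ > 0 be a constant such that max{μ₁ s² + β t², β s² + μ₂ t²} ≤ 2α₀·√(F(s,t)) for all s, t ∈ ℝ. Then for every γ > 0 and all (s,t) with F(s,t) > γ²/4 one has |∂ₛF_γ(s,t)| ≤ α₀·γ·|s| and |∂ₜF_γ(s,t)| ≤ α₀·γ·|t|. -/
lemma F_symm (μ₁ μ₂ β s t : ℝ) : F μ₁ μ₂ β s t = F μ₂ μ₁ β t s := by
  simp [F]; ring

lemma main_aux (μ₁ μ₂ β α₀ γ : ℝ) (hμ₁ : 0 ≤ μ₁) (hβ : 0 ≤ β) (hα₀ : 0 < α₀) (hγ : 0 < γ)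
    (s t : ℝ)
    (hb : μ₁ * s ^ 2 + β * t ^ 2 ≤ 2 * α₀ * Real.sqrt (F μ₁ μ₂ β s t))
    (hst : γ ^ 2 / 4 < F μ₁ μ₂ β s t) :
    |deriv (fun s' => Ftrunc μ₁ μ₂ β γ s' t) s| ≤ α₀ * γ * |s| := by
  set A := μ₁ * s ^ 2 + β * t ^ 2 with hA
  have hF0 : 0 < F μ₁ μ₂ β s t := lt_trans (by positivity) hst
  set R := Real.sqrt (F μ₁ μ₂ β s t) with hR
  have hRpos : 0 < R := Real.sqrt_pos.2 hF0
  have hFd : HasDerivAt (fun s' => F μ₁ μ₂ β s' t) (s * A) s := by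
    have h1 : HasDerivAt (fun s' : ℝ => (1/4 : ℝ) * (μ₁ * s' ^ 4 + 2 * β * s' ^ 2 * t ^ 2 + μ₂ * t ^ 4))
        ((1/4) * (μ₁ * (4 * s ^ 3) + (2 * β) * (2 * s ^ 1) * t ^ 2 + 0)) s := by
      exact ((((hasDerivAt_pow 4 s).const_mul μ₁).add
        (((hasDerivAt_pow 2 s).const_mul (2*β)).mul_const (t^2))).add
        (hasDerivAt_const s (μ₂ * t ^ 4))).const_mul (1/4)
    convert h1 using 1
    case e'_9 => simp only [hA]; ring
    case e'_8 => rfl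
  have hsq : HasDerivAt (fun s' => Real.sqrt (F μ₁ μ₂ β s' t)) (s * A / (2 * R)) s :=
    hFd.sqrt (ne_of_gt hF0)
  have hg : HasDerivAt (fun s' => γ * Real.sqrt (F μ₁ μ₂ β s' t) - γ ^ 2 / 4)
      (γ * (s * A / (2 * R))) s := (hsq.const_mul γ).sub_const _
  have hcont : Continuous (fun s' => F μ₁ μ₂ β s' t) := by
    unfold F; continuity
  have hopen : IsOpen {s' : ℝ | γ ^ 2 / 4 < F μ₁ μ₂ β s' t} :=
    isOpen_lt continuous_const hcont
  have heq : (fun s' => Ftrunc μ₁ μ₂ β γ s' t)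
      =ᶠ[nhds s] (fun s' => γ * Real.sqrt (F μ₁ μ₂ β s' t) - γ ^ 2 / 4) :=
    Filter.eventuallyEq_of_mem (hopen.mem_nhds hst)
      (fun x hx => by simp only [Ftrunc]; rw [if_neg (not_le.2 hx)])
  have hd : deriv (fun s' => Ftrunc μ₁ μ₂ β γ s' t) s = γ * (s * A / (2 * R)) := by
    rw [heq.deriv_eq]; exact hg.deriv
  rw [hd]
  have hA0 : 0 ≤ A := by positivity
  have habs : |γ * (s * A / (2 * R))| = γ * |s| * A / (2 * R) := by
    rw [abs_mul, abs_div, abs_mul, abs_of_pos hγ, abs_of_nonneg hA0,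
      abs_of_pos (by linarith : (0:ℝ) < 2 * R)]
    ring
  rw [habs, div_le_iff₀ (by linarith : (0:ℝ) < 2 * R)]
  have h1 : |s| * A ≤ |s| * (2 * α₀ * R) := mul_le_mul_of_nonneg_left hb (abs_nonneg s)
  nlinarith [abs_nonneg s, hγ.le]

theorem stmt_6 (μ₁ μ₂ β : ℝ) (hμ₁ : 0 < μ₁) (hμ₂ : 0 < μ₂) (hβ : 0 < β)
    (α₀ : ℝ) (hα₀ : 0 < α₀)
    (hbound : ∀ s t : ℝ,
      max (μ₁ * s ^ 2 + β * t ^ 2) (β * s ^ 2 + μ₂ * t ^ 2) ≤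
        2 * α₀ * Real.sqrt (F μ₁ μ₂ β s t))
    (γ : ℝ) (hγ : 0 < γ) (s t : ℝ) (hst : γ ^ 2 / 4 < F μ₁ μ₂ β s t) :
    |dsFtrunc μ₁ μ₂ β γ s t| ≤ α₀ * γ * |s| ∧
    |dtFtrunc μ₁ μ₂ β γ s t| ≤ α₀ * γ * |t| := by
  constructor
  · exact main_aux μ₁ μ₂ β α₀ γ hμ₁.le hβ.le hα₀ hγ s t
      (le_trans (le_max_left _ _) (hbound s t)) hst
  · have hfun : (fun t' => Ftrunc μ₁ μ₂ β γ s t') = (fun t' => Ftrunc μ₂ μ₁ β γ t' s) := by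
      funext t'; simp only [Ftrunc, F_symm μ₁ μ₂ β s t']
    unfold dtFtrunc
    rw [hfun]
    refine main_aux μ₂ μ₁ β α₀ γ hμ₂.le hβ.le hα₀ hγ t s ?_ ?_
    · rw [← F_symm]
      calc μ₂ * t ^ 2 + β * s ^ 2 = β * s ^ 2 + μ₂ * t ^ 2 := by ring
        _ ≤ _ := le_trans (le_max_right _ _) (hbound s t)
    · rwa [← F_symm]
end
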